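/- Fix p ≥ 3 and g ∈ 𝒢_a. Then ℐ_p(g)² ≤ 𝒥_p(g). Moreover, equality holds if and only if there exist constants C > 0 and κ ∈ ℝ such that g(t) = C·exp(κ·arcsin t) for all t ∈ [−1,1]. -/

import Mathlib

open MeasureTheory Matrix Real Filter Set ProbabilityTheory
open scoped RealInnerProductSpace BigOperators ENNReal NNReal Topology

noncomputable section

/-- `ℝ^q` with the Euclidean structure. -/
abbrev Euc (q : ℕ) := EuclideanSpace ℝ (Fin q)

/-- A function `Fin q → ℝ` viewed as a Euclidean vector. -/
def eucOf {q : ℕ} (v : Fin q → ℝ) : Euc q := WithLp.toLp 2 v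

/-- The surface-area measure on the unit sphere of `ℝ^q`, viewed as a measure on `ℝ^q`. -/
def sphereMeasure (q : ℕ) : Measure (Euc q) :=
  Measure.map (Subtype.val) ((volume : Measure (Euc q)).toSphere)

/-- `ω_q = 2 π^{q/2} / Γ(q/2)`, the surface area of the unit sphere in `ℝ^q`. -/
def omegaS (q : ℕ) : ℝ := 2 * Real.pi ^ ((q : ℝ) / 2) / Real.Gamma ((q : ℝ) / 2)

/-- A matrix applied to a Euclidean vector. -/
def mulVecE {m q : ℕ} (A : Matrix (Fin m) (Fin q) ℝ) (v : Euc q) : Euc m :=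
  eucOf (A.mulVec (fun i => v i))

/-- The multivariate sign `u_θ(x) = Γ_θᵀ x / ‖Γ_θᵀ x‖`. -/
def uSign {p : ℕ} (Γ : Matrix (Fin p) (Fin (p - 1)) ℝ) (x : Euc p) : Euc (p - 1) :=
  ‖mulVecE Γᵀ x‖⁻¹ • mulVecE Γᵀ x

/-- An angular function for dimension `p`. -/
structure AngFn (p : ℕ) where
  g : ℝ → ℝ
  meas : Measurable g
  nonneg : ∀ v ∈ Set.Icc (-1 : ℝ) 1, 0 ≤ g v
  integrable : IntegrableOn (fun v => (1 - v ^ 2) ^ (((p : ℝ) - 3) / 2) * g v) (Set.Ioo (-1) 1)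
  pos : 0 < ∫ v in Set.Ioo (-1 : ℝ) 1, (1 - v ^ 2) ^ (((p : ℝ) - 3) / 2) * g v

/-- The normalizing constant `c_{p,g}`. -/
def cpg (p : ℕ) (G : AngFn p) : ℝ :=
  (omegaS (p - 1) * ∫ v in Set.Ioo (-1 : ℝ) 1, (1 - v ^ 2) ^ (((p : ℝ) - 3) / 2) * G.g v)⁻¹

/-- The density `g̃_p` of the cosine `v_θ(X)`. -/
def gtilde (p : ℕ) (G : AngFn p) (v : ℝ) : ℝ :=
  omegaS (p - 1) * cpg p G * (1 - v ^ 2) ^ (((p : ℝ) - 3) / 2) * G.g v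

/-- The rotationally symmetric distribution `P_{θ,g}` on the unit sphere of `ℝ^p`. -/
def rotSymmLaw (p : ℕ) (θ : Euc p) (G : AngFn p) : Measure (Euc p) :=
  (sphereMeasure p).withDensity (fun x => ENNReal.ofReal (cpg p G * G.g (⟪x, θ⟫)))

/-- The quadratic form `u ↦ uᵀ A u`. -/
def quadForm {m : ℕ} (A : Matrix (Fin m) (Fin m) ℝ) (u : Euc m) : ℝ :=
  (fun i => u i) ⬝ᵥ A.mulVec (fun i => u i)

/-- The angular central Gaussian normalizing constant. -/
def cACG (p : ℕ) (Λ : Matrix (Fin (p - 1)) (Fin (p - 1)) ℝ) : ℝ :=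
  (omegaS (p - 1) * Real.sqrt Λ.det)⁻¹

/-- The vMF normalizing constant on `𝒮^{p-2}`. -/
def cvMF (p : ℕ) (μ : Euc (p - 1)) (κ : ℝ) : ℝ :=
  (∫ u, Real.exp (κ * ⟪μ, u⟫) ∂(sphereMeasure (p - 1)))⁻¹

/-- Members of the class `𝒢_a`. -/
structure GaFn (p : ℕ) extends AngFn p where
  gpos : ∀ v ∈ Set.Icc (-1 : ℝ) 1, 0 < g v
  dg : ℝ → ℝ
  dg_meas : Measurable dg
  dg_intervalIntegrable : IntervalIntegrable dg volume (-1) 1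
  abs_cont : ∀ x ∈ Set.Icc (-1 : ℝ) 1, g x = g (-1) + ∫ t in (-1 : ℝ)..x, dg t
  nonconst : ∃ x ∈ Set.Icc (-1 : ℝ) 1, ∃ y ∈ Set.Icc (-1 : ℝ) 1, g x ≠ g y
  score_sq_integrable : IntegrableOn
    (fun t => (dg t / g t) ^ 2 * (1 - t ^ 2) * ((1 - t ^ 2) ^ (((p : ℝ) - 3) / 2) * g t))
    (Set.Ioo (-1) 1)

/-- `𝒥_p(g)`. -/
def scoreJ (p : ℕ) (G : GaFn p) : ℝ :=
  ∫ t in Set.Ioo (-1 : ℝ) 1, (G.dg t / G.g t) ^ 2 * (1 - t ^ 2) * gtilde p G.toAngFn t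

/-- `ℐ_p(g)`. -/
def scoreI (p : ℕ) (G : GaFn p) : ℝ :=
  ∫ t in Set.Ioo (-1 : ℝ) 1, (G.dg t / G.g t) * Real.sqrt (1 - t ^ 2) * gtilde p G.toAngFn t

/-- The chi-square distribution with `k` degrees of freedom. -/
def chiSq (k : ℕ) : Measure ℝ :=
  Measure.map (fun z : Fin k → ℝ => ∑ i, (z i) ^ 2) (Measure.pi fun _ => gaussianReal 0 1)

/-- The noncentral chi-square distribution with `k` degrees of freedom and noncentrality `lam`. -/
def ncChiSq (k : ℕ) (lam : ℝ) : Measure ℝ :=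
  Measure.map (fun z : Fin k → ℝ => ∑ i, (z i + if (i : ℕ) = 0 then Real.sqrt lam else 0) ^ 2)
    (Measure.pi fun _ => gaussianReal 0 1)

/-- The location statistic `Q_θ^{loc}`. -/
def Qloc (p n : ℕ) (Γ : Matrix (Fin p) (Fin (p - 1)) ℝ) (x : Fin n → Euc p) : ℝ :=
  (n : ℝ) * ((p : ℝ) - 1) * ‖(n : ℝ)⁻¹ • ∑ i, uSign Γ (x i)‖ ^ 2

/-- The matrix `S_θ`. -/
def Smat (p n : ℕ) (Γ : Matrix (Fin p) (Fin (p - 1)) ℝ) (x : Fin n → Euc p) :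
    Matrix (Fin (p - 1)) (Fin (p - 1)) ℝ :=
  (n : ℝ)⁻¹ • ∑ i, vecMulVec (fun a => uSign Γ (x i) a) (fun a => uSign Γ (x i) a)

/-- The scatter statistic `Q_θ^{sc}`. -/
def Qsc (p n : ℕ) (Γ : Matrix (Fin p) (Fin (p - 1)) ℝ) (x : Fin n → Euc p) : ℝ :=
  ((n : ℝ) * ((p : ℝ) ^ 2 - 1) / 2) *
    (Matrix.trace (Smat p n Γ x * Smat p n Γ x) - 1 / ((p : ℝ) - 1))

/-- Convergence in distribution of real statistics computed from samples. -/
def TendstoInDistrib {Ω : ℕ → Type} [∀ n, MeasurableSpace (Ω n)]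
    (P : ∀ n, Measure (Ω n)) (T : ∀ n, Ω n → ℝ) (ν : Measure ℝ) : Prop :=
  ∀ f : BoundedContinuousFunction ℝ ℝ,
    Tendsto (fun n => ∫ x, f (T n x) ∂(P n)) atTop (nhds (∫ y, f y ∂ν))

/-- The tangent elliptical law `TE_p(θ, g, Λ)` (relative to a tangent frame `Γ`). -/
def TElaw (p : ℕ) (θ : Euc p) (Γ : Matrix (Fin p) (Fin (p - 1)) ℝ) (G : AngFn p)
    (Λ : Matrix (Fin (p - 1)) (Fin (p - 1)) ℝ) : Measure (Euc p) :=
  Measure.map (fun vu : ℝ × Euc (p - 1) =>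
      vu.1 • θ + Real.sqrt (1 - vu.1 ^ 2) • mulVecE Γ vu.2)
    (((volume.restrict (Set.Icc (-1 : ℝ) 1)).withDensity fun v =>
        ENNReal.ofReal (gtilde p G v)).prod
      ((sphereMeasure (p - 1)).withDensity fun u =>
        ENNReal.ofReal (cACG p Λ * quadForm Λ⁻¹ u ^ (-(((p : ℝ) - 1) / 2)))))

/-- The tangent vMF law `TM_p(θ, g, μ, κ)` (relative to a tangent frame `Γ`). -/
def TMlaw (p : ℕ) (θ : Euc p) (Γ : Matrix (Fin p) (Fin (p - 1)) ℝ) (G : AngFn p)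
    (μ : Euc (p - 1)) (κ : ℝ) : Measure (Euc p) :=
  Measure.map (fun vu : ℝ × Euc (p - 1) =>
      vu.1 • θ + Real.sqrt (1 - vu.1 ^ 2) • mulVecE Γ vu.2)
    (((volume.restrict (Set.Icc (-1 : ℝ) 1)).withDensity fun v =>
        ENNReal.ofReal (gtilde p G v)).prod
      ((sphereMeasure (p - 1)).withDensity fun u =>
        ENNReal.ofReal (cvMF p μ κ * Real.exp (κ * ⟪μ, u⟫))))


/-- The tangent-normal map `(v, u) ↦ v θ + √(1-v²) Γ_θ u`. -/
def tnMap (p : ℕ) (θ : Euc p) (Γ : Matrix (Fin p) (Fin (p - 1)) ℝ)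
    (vu : ℝ × Euc (p - 1)) : Euc p :=
  vu.1 • θ + Real.sqrt (1 - vu.1 ^ 2) • mulVecE Γ vu.2

/-- The uniform probability measure `σ_{p-2}/ω_{p-1}` on the unit sphere of `ℝ^{p-1}`. -/
def unifSign (p : ℕ) : Measure (Euc (p - 1)) :=
  (ENNReal.ofReal (omegaS (p - 1)))⁻¹ • sphereMeasure (p - 1)


/-- Auxiliary: a Lebesgue-integrable function whose integral over every `Ioc` vanishes is a.e. zero. -/
private lemma auxScore_ae_zero_of_integral_Ioc (f : ℝ → ℝ) (hint : Integrable f volume)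
    (h : ∀ a b : ℝ, a < b → ∫ x in Set.Ioc a b, f x = 0) : f =ᵐ[volume] 0 := by
  have hmp : AEMeasurable (fun x => ENNReal.ofReal (f x)) volume :=
    hint.aemeasurable.ennreal_ofReal
  have hmm : AEMeasurable (fun x => ENNReal.ofReal (-f x)) volume :=
    hint.neg.aemeasurable.ennreal_ofReal
  set μp := (volume : Measure ℝ).withDensity (fun x => ENNReal.ofReal (f x)) with hμp
  set μm := (volume : Measure ℝ).withDensity (fun x => ENNReal.ofReal (-f x)) with hμm
  haveI : IsFiniteMeasure μp := isFiniteMeasure_withDensity_ofReal hint.2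
  haveI : IsFiniteMeasure μm := isFiniteMeasure_withDensity_ofReal hint.neg.2
  have hext : μp = μm := by
    refine Measure.ext_of_Ioc μp μm (fun a b hab => ?_)
    rw [hμp, hμm, withDensity_apply _ measurableSet_Ioc, withDensity_apply _ measurableSet_Ioc]
    have hfr : Integrable f (volume.restrict (Set.Ioc a b)) := hint.restrict
    have key := integral_eq_lintegral_pos_part_sub_lintegral_neg_part hfr
    rw [h a b hab] at key
    have h1 : ∫⁻ x in Set.Ioc a b, ENNReal.ofReal (f x) ≠ ⊤ :=
      ne_of_lt (lt_of_le_of_lt (lintegral_mono fun x => Real.ofReal_le_enorm (f x)) hfr.2)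
    have h2 : ∫⁻ x in Set.Ioc a b, ENNReal.ofReal (-f x) ≠ ⊤ :=
      ne_of_lt (lt_of_le_of_lt (lintegral_mono fun x => Real.ofReal_le_enorm (-f x)) hfr.neg.2)
    exact (ENNReal.toReal_eq_toReal_iff' h1 h2).mp (sub_eq_zero.mp key.symm)
  have hae : (fun x => ENNReal.ofReal (f x)) =ᵐ[volume] (fun x => ENNReal.ofReal (-f x)) :=
    (withDensity_eq_iff_of_sigmaFinite hmp hmm).mp hext
  filter_upwards [hae] with x hx
  rcases lt_trichotomy (f x) 0 with hlt | heq | hgt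
  · have h1 : ENNReal.ofReal (f x) = 0 := ENNReal.ofReal_eq_zero.2 hlt.le
    have h2 : 0 < ENNReal.ofReal (-f x) := ENNReal.ofReal_pos.2 (by linarith)
    rw [hx] at h1; exact absurd h1 h2.ne'
  · exact heq
  · have h1 : ENNReal.ofReal (-f x) = 0 := ENNReal.ofReal_eq_zero.2 (by linarith)
    have h2 : 0 < ENNReal.ofReal (f x) := ENNReal.ofReal_pos.2 hgt
    rw [← hx] at h1; exact absurd h1 h2.ne'

/-- Auxiliary: localized version on `Ioo (-1) 1`. -/
private lemma auxScore_ae_zero_on_Ioo (ψ : ℝ → ℝ)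
    (hloc : ∀ a b : ℝ, -1 < a → b < 1 → IntegrableOn ψ (Set.Ioc a b) volume)
    (h : ∀ a b : ℝ, -1 < a → b < 1 → ∫ x in Set.Ioc a b, ψ x = 0) :
    ∀ᵐ x ∂(volume.restrict (Set.Ioo (-1:ℝ) 1)), ψ x = 0 := by
  have key : ∀ n : ℕ, ∀ᵐ x ∂(volume : Measure ℝ),
      (Set.Ioc (-1 + 1/(n+2) : ℝ) (1 - 1/(n+2))).indicator ψ x = 0 := by
    intro n
    have hpos : (0:ℝ) < 1/(n+2) := by positivity
    have ha : (-1:ℝ) < -1 + 1/(n+2) := by linarith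
    have hb : (1:ℝ) - 1/(n+2) < 1 := by linarith
    have hint : Integrable ((Set.Ioc (-1 + 1/(n+2) : ℝ) (1 - 1/(n+2))).indicator ψ) volume := by
      rw [integrable_indicator_iff measurableSet_Ioc]
      exact hloc _ _ ha hb
    refine auxScore_ae_zero_of_integral_Ioc _ hint (fun c d hcd => ?_)
    rw [setIntegral_indicator measurableSet_Ioc, Set.Ioc_inter_Ioc]
    rcases le_or_gt (min d (1 - 1/(n+2))) (max c (-1 + 1/(n+2))) with hle | hlt
    · rw [Set.Ioc_eq_empty (not_lt.2 hle)]; simp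
    · exact h _ _ (lt_of_lt_of_le ha (le_max_right _ _)) (lt_of_le_of_lt (min_le_right _ _) hb)
  rw [ae_restrict_iff' measurableSet_Ioo]
  have hall := (ae_all_iff).2 key
  filter_upwards [hall] with x hx hmem
  obtain ⟨hx1, hx2⟩ := hmem
  obtain ⟨n, hn⟩ := exists_nat_one_div_lt (show (0:ℝ) < min (x + 1) (1 - x) by
    simp only [lt_min_iff]; constructor <;> linarith)
  have h2 : (1:ℝ)/(n+2) < min (x+1) (1-x) := by
    refine lt_of_le_of_lt ?_ hn
    apply one_div_le_one_div_of_le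
    · positivity
    · push_cast; linarith
  have hmem' : x ∈ Set.Ioc (-1 + 1/(n+2) : ℝ) (1 - 1/(n+2)) := by
    have h3 := lt_min_iff.mp h2
    constructor
    · linarith [h3.1]
    · linarith [h3.2]
  have h4 := hx n
  rwa [Set.indicator_of_mem hmem'] at h4

private lemma auxScore_omegaS_pos {q : ℕ} (hq : 1 ≤ q) : 0 < omegaS q := by
  have h2 : (0:ℝ) < (q:ℝ)/2 := by
    have h1 : (1:ℝ) ≤ (q:ℝ) := by exact_mod_cast hq
    linarith
  have hΓ := Real.Gamma_pos_of_pos h2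
  rw [omegaS]
  positivity

/-- Jensen inequality `ℐ_p(g)² ≤ 𝒥_p(g)` with equality characterization. -/
theorem scoreI_sq_le_scoreJ (p : ℕ) (hp : 3 ≤ p) (G : GaFn p) :
    scoreI p G ^ 2 ≤ scoreJ p G ∧
    (scoreI p G ^ 2 = scoreJ p G ↔
      ∃ C > (0 : ℝ), ∃ κ : ℝ, ∀ t ∈ Set.Icc (-1 : ℝ) 1,
        G.g t = C * Real.exp (κ * Real.arcsin t)) := by
  classical
  have hIoo : MeasurableSet (Set.Ioo (-1:ℝ) 1) := measurableSet_Ioo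
  have hsq : ∀ x : ℝ, x ∈ Set.Ioo (-1:ℝ) 1 → (0:ℝ) < 1 - x^2 := by
    intro x hx; nlinarith [hx.1, hx.2]
  have hω : 0 < omegaS (p-1) := auxScore_omegaS_pos (by omega)
  set S : ℝ := ∫ v in Set.Ioo (-1:ℝ) 1, (1 - v^2) ^ (((p:ℝ)-3)/2) * G.g v with hSdef
  have hSpos : 0 < S := G.pos
  have hA : omegaS (p-1) * cpg p G.toAngFn = S⁻¹ := by
    show omegaS (p-1) * (omegaS (p-1) * S)⁻¹ = S⁻¹
    rw [mul_inv, ← mul_assoc, mul_inv_cancel₀ hω.ne', one_mul]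
  set w : ℝ → ℝ := fun t => gtilde p G.toAngFn t with hwdef
  have hw_eq : ∀ t, w t
      = (omegaS (p-1) * cpg p G.toAngFn) * ((1 - t^2) ^ (((p:ℝ)-3)/2) * G.g t) := by
    intro t; simp only [hwdef, gtilde]; ring
  have hwpos : ∀ t ∈ Set.Ioo (-1:ℝ) 1, 0 < w t := by
    intro t ht
    rw [hw_eq, hA]
    have h1 : (0:ℝ) < 1 - t^2 := hsq t ht
    have h2 : 0 < G.g t := G.gpos t ⟨ht.1.le, ht.2.le⟩
    have h3 : (0:ℝ) < S⁻¹ := inv_pos.2 hSpos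
    exact mul_pos h3 (mul_pos (Real.rpow_pos_of_pos h1 _) h2)
  have hwint : IntegrableOn w (Set.Ioo (-1:ℝ) 1) volume := by
    have h := G.integrable.const_mul (omegaS (p-1) * cpg p G.toAngFn)
    exact h.congr (ae_of_all _ fun t => (hw_eq t).symm)
  have hw1 : ∫ t in Set.Ioo (-1:ℝ) 1, w t = 1 := by
    have h1 : ∫ t in Set.Ioo (-1:ℝ) 1, w t = (omegaS (p-1) * cpg p G.toAngFn) * S := by
      rw [hSdef, ← integral_const_mul]
      exact setIntegral_congr_fun hIoo fun t ht => hw_eq t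
    rw [h1, hA, inv_mul_cancel₀ hSpos.ne']
  have mw : Measurable w := by
    have hρ : Measurable fun t : ℝ => (1 - t^2) ^ (((p:ℝ)-3)/2) :=
      (measurable_const.sub (measurable_id.pow_const 2)).pow measurable_const
    simp only [hwdef, gtilde]
    exact (hρ.const_mul _).mul G.meas
  set f : ℝ → ℝ := fun t => G.dg t / G.g t * Real.sqrt (1 - t^2) with hfdef
  have mf : Measurable f :=
    (G.dg_meas.div G.meas).mul (measurable_const.sub (measurable_id.pow_const 2)).sqrt
  have hI : scoreI p G = ∫ t in Set.Ioo (-1:ℝ) 1, f t * w t := by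
    simp only [scoreI, hfdef, hwdef]
  have hJ : scoreJ p G = ∫ t in Set.Ioo (-1:ℝ) 1, f t^2 * w t := by
    simp only [scoreJ, hwdef]
    refine setIntegral_congr_fun hIoo (fun t ht => ?_)
    have h1 : (0:ℝ) ≤ 1 - t^2 := (hsq t ht).le
    simp only [hfdef]
    rw [mul_pow, Real.sq_sqrt h1]
  have hJint : IntegrableOn (fun t => (G.dg t / G.g t)^2 * (1 - t^2) * w t)
      (Set.Ioo (-1:ℝ) 1) volume := by
    have h := G.score_sq_integrable.const_mul (omegaS (p-1) * cpg p G.toAngFn)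
    refine h.congr (ae_of_all _ fun t => ?_)
    simp only [hw_eq]; ring
  have hf2int : IntegrableOn (fun t => f t^2 * w t) (Set.Ioo (-1:ℝ) 1) volume := by
    refine hJint.congr_fun (fun t ht => ?_) hIoo
    have h1 : (0:ℝ) ≤ 1 - t^2 := (hsq t ht).le
    simp only [hfdef]
    rw [mul_pow, Real.sq_sqrt h1]
  have hfwint : IntegrableOn (fun t => f t * w t) (Set.Ioo (-1:ℝ) 1) volume := by
    have hb : IntegrableOn (fun t => (1/2 : ℝ) * (f t^2 * w t + w t)) (Set.Ioo (-1:ℝ) 1) volume :=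
      (hf2int.add hwint).const_mul _
    refine Integrable.mono' hb ((mf.mul mw).aestronglyMeasurable) ?_
    filter_upwards [ae_restrict_mem hIoo] with t ht
    have hw0 := (hwpos t ht).le
    rw [Real.norm_eq_abs, abs_mul, abs_of_nonneg hw0]
    nlinarith [mul_nonneg (sq_nonneg (|f t| - 1)) hw0, sq_abs (f t), abs_nonneg (f t)]
  set Isc := scoreI p G with hIdef
  have e1 : (fun t => (f t - Isc)^2 * w t)
      = fun t => (f t^2 * w t - 2*Isc * (f t * w t)) + Isc^2 * w t := funext fun t => by ring
  have int1 : Integrable (fun t => f t^2 * w t - 2*Isc * (f t * w t))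
      (volume.restrict (Set.Ioo (-1:ℝ) 1)) := hf2int.sub (hfwint.const_mul _)
  have int2 : Integrable (fun t => Isc^2 * w t)
      (volume.restrict (Set.Ioo (-1:ℝ) 1)) := hwint.const_mul _
  have int3 : Integrable (fun t => 2*Isc * (f t * w t))
      (volume.restrict (Set.Ioo (-1:ℝ) 1)) := hfwint.const_mul _
  have hkey : ∫ t in Set.Ioo (-1:ℝ) 1, (f t - Isc)^2 * w t = scoreJ p G - Isc^2 := by
    rw [e1, integral_add int1 int2, integral_sub hf2int int3, integral_const_mul,
      integral_const_mul, hw1, ← hI, ← hJ]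
    ring
  have hpos : 0 ≤ ∫ t in Set.Ioo (-1:ℝ) 1, (f t - Isc)^2 * w t :=
    setIntegral_nonneg hIoo (fun t ht => mul_nonneg (sq_nonneg _) (hwpos t ht).le)
  constructor
  · linarith
  constructor
  · -- equality → exponential form
    intro heq
    have hzero : ∫ t in Set.Ioo (-1:ℝ) 1, (f t - Isc)^2 * w t = 0 := by
      rw [hkey, ← heq]; ring
    have hint0 : Integrable (fun t => (f t - Isc)^2 * w t)
        (volume.restrict (Set.Ioo (-1:ℝ) 1)) := by
      rw [e1]
      exact int1.add int2
    have hnn : 0 ≤ᵐ[volume.restrict (Set.Ioo (-1:ℝ) 1)] fun t => (f t - Isc)^2 * w t := by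
      filter_upwards [ae_restrict_mem hIoo] with t ht
      exact mul_nonneg (sq_nonneg _) (hwpos t ht).le
    have hae0 := (integral_eq_zero_iff_of_nonneg_ae hnn hint0).mp hzero
    have hdg : ∀ᵐ t ∂(volume : Measure ℝ), t ∈ Set.Ioo (-1:ℝ) 1 →
        G.dg t = Isc * G.g t / Real.sqrt (1 - t^2) := by
      rw [← ae_restrict_iff' hIoo]
      filter_upwards [hae0, ae_restrict_mem hIoo] with t h1 h2
      have hw' := hwpos t h2
      have hfI : f t = Isc := by
        have h3 : (f t - Isc)^2 * w t = 0 := h1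
        rcases mul_eq_zero.mp h3 with h4 | h4
        · have h5 := pow_eq_zero_iff (n := 2) (by norm_num) |>.mp h4
          linarith [sub_eq_zero.mp h5]
        · exact absurd h4 hw'.ne'
      have hg' : G.g t ≠ 0 := (G.gpos t ⟨h2.1.le, h2.2.le⟩).ne'
      have hs' : Real.sqrt (1 - t^2) ≠ 0 := (Real.sqrt_pos.2 (hsq t h2)).ne'
      simp only [hfdef] at hfI
      field_simp at hfI ⊢
      linarith [hfI]
    have hne1 : ∀ᵐ x : ℝ ∂(volume : Measure ℝ), x ≠ 1 := by
      rw [ae_iff]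
      simp only [not_not, Set.setOf_eq_eq_singleton]
      exact measure_singleton 1
    set φ : ℝ → ℝ := fun t => Isc * G.g t / Real.sqrt (1 - t^2) with hφdef
    have mφ : Measurable φ :=
      (G.meas.const_mul Isc).div (measurable_const.sub (measurable_id.pow_const 2)).sqrt
    have hdgφIoc : ∀ᵐ x ∂(volume : Measure ℝ), x ∈ Set.Ioc (-1:ℝ) 1 → G.dg x = φ x := by
      filter_upwards [hdg, hne1] with x h1 h2 h3
      exact h1 ⟨h3.1, lt_of_le_of_ne h3.2 h2⟩
    have hφint : IntervalIntegrable φ volume (-1) 1 := by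
      have hdgi : IntegrableOn G.dg (Set.Ioc (-1:ℝ) 1) volume := by
        have h := G.dg_intervalIntegrable
        rwa [intervalIntegrable_iff_integrableOn_Ioc_of_le (by norm_num : (-1:ℝ) ≤ 1)] at h
      rw [intervalIntegrable_iff_integrableOn_Ioc_of_le (by norm_num : (-1:ℝ) ≤ 1)]
      exact hdgi.congr ((ae_restrict_iff' measurableSet_Ioc).mpr hdgφIoc)
    have hgrep : ∀ y ∈ Set.Icc (-1:ℝ) 1, G.g y = G.g (-1) + ∫ t in (-1:ℝ)..y, φ t := by
      intro y hy
      have hcong : ∫ t in (-1:ℝ)..y, G.dg t = ∫ t in (-1:ℝ)..y, φ t := by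
        refine intervalIntegral.integral_congr_ae ?_
        filter_upwards [hdgφIoc] with x hx hx'
        rw [Set.uIoc_of_le hy.1] at hx'
        exact hx ⟨hx'.1, le_trans hx'.2 hy.2⟩
      rw [← hcong]
      exact G.abs_cont y hy
    have hgcont : ContinuousOn G.g (Set.Icc (-1:ℝ) 1) := by
      have hp1 := intervalIntegral.continuousOn_primitive_interval'
        G.dg_intervalIntegrable (Set.left_mem_uIcc (a := (-1:ℝ)) (b := 1))
      have h2 : ContinuousOn (fun y => G.g (-1) + ∫ t in (-1:ℝ)..y, G.dg t)
          (Set.uIcc (-1:ℝ) 1) := continuousOn_const.add hp1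
      rw [Set.uIcc_of_le (by norm_num : (-1:ℝ) ≤ 1)] at h2
      exact ContinuousOn.congr h2 (fun y hy => G.abs_cont y hy)
    have hφcont : ContinuousOn φ (Set.Ioo (-1:ℝ) 1) := by
      simp only [hφdef]
      apply ContinuousOn.div
      · exact continuousOn_const.mul (hgcont.mono Set.Ioo_subset_Icc_self)
      · exact ((continuous_const.sub (continuous_pow 2)).sqrt).continuousOn
      · intro x hx; exact (Real.sqrt_pos.2 (hsq x hx)).ne'
    have hgderiv : ∀ x ∈ Set.Ioo (-1:ℝ) 1, HasDerivAt G.g (φ x) x := by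
      intro x hx
      have hmem : Set.Ioo (-1:ℝ) 1 ∈ nhds x := Ioo_mem_nhds hx.1 hx.2
      have hxu : x ∈ Set.uIcc (-1:ℝ) 1 := by
        rw [Set.uIcc_of_le (by norm_num : (-1:ℝ) ≤ 1)]
        exact ⟨hx.1.le, hx.2.le⟩
      have hprim : HasDerivAt (fun y => ∫ t in (-1:ℝ)..y, φ t) (φ x) x :=
        intervalIntegral.integral_hasDerivAt_right
          (hφint.mono_set (Set.uIcc_subset_uIcc Set.left_mem_uIcc hxu))
          (mφ.stronglyMeasurable.stronglyMeasurableAtFilter)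
          (hφcont.continuousAt hmem)
      have hev : G.g =ᶠ[nhds x] (fun y => G.g (-1) + ∫ t in (-1:ℝ)..y, φ t) :=
        eventually_of_mem hmem (fun y hy => hgrep y (Set.Ioo_subset_Icc_self hy))
      exact HasDerivAt.congr_of_eventuallyEq (hprim.const_add (G.g (-1))) hev
    have hhderiv : ∀ x ∈ Set.Ioo (-1:ℝ) 1,
        HasDerivAt (fun y => G.g y * Real.exp (-Isc * Real.arcsin y)) 0 x := by
      intro x hx
      have hE : HasDerivAt (fun y => Real.exp (-Isc * Real.arcsin y))
          (Real.exp (-Isc * Real.arcsin x) * (-Isc * (1 / Real.sqrt (1 - x^2)))) x :=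
        ((Real.hasDerivAt_arcsin hx.1.ne' hx.2.ne).const_mul (-Isc)).exp
      have h1 := (hgderiv x hx).mul hE
      refine h1.congr_deriv ?_
      have hs' : Real.sqrt (1 - x^2) ≠ 0 := (Real.sqrt_pos.2 (hsq x hx)).ne'
      simp only [hφdef]
      field_simp
      ring
    have hhcont : ContinuousOn (fun y => G.g y * Real.exp (-Isc * Real.arcsin y))
        (Set.Icc (-1:ℝ) 1) :=
      hgcont.mul (((continuous_const.mul Real.continuous_arcsin).rexp).continuousOn)
    have hconst : ∀ a ∈ Set.Icc (-1:ℝ) 1, ∀ b ∈ Set.Icc (-1:ℝ) 1, a < b →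
        G.g a * Real.exp (-Isc * Real.arcsin a) = G.g b * Real.exp (-Isc * Real.arcsin b) := by
      intro a ha b hb hab
      obtain ⟨c, hc, hc0⟩ := exists_hasDerivAt_eq_slope
        (fun y => G.g y * Real.exp (-Isc * Real.arcsin y)) (fun _ => 0) hab
        (hhcont.mono (Set.Icc_subset_Icc ha.1 hb.2))
        (fun x hx => hhderiv x ⟨lt_of_le_of_lt ha.1 hx.1, lt_of_lt_of_le hx.2 hb.2⟩)
      have h2 : (G.g b * Real.exp (-Isc * Real.arcsin b)
          - G.g a * Real.exp (-Isc * Real.arcsin a)) / (b - a) = 0 := hc0.symm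
      rcases div_eq_zero_iff.mp h2 with h3 | h3
      · linarith [sub_eq_zero.mp h3]
      · exact absurd h3 (sub_ne_zero.2 (ne_of_gt (by linarith)))
    have h0mem : (0:ℝ) ∈ Set.Icc (-1:ℝ) 1 := by norm_num
    refine ⟨G.g 0, G.gpos 0 h0mem, Isc, fun t ht => ?_⟩
    have hht : G.g t * Real.exp (-Isc * Real.arcsin t)
        = G.g 0 * Real.exp (-Isc * Real.arcsin 0) := by
      rcases lt_trichotomy t 0 with h | h | h
      · exact hconst t ht 0 h0mem h
      · rw [h]
      · exact (hconst 0 h0mem t ht h).symm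
    rw [Real.arcsin_zero, mul_zero, Real.exp_zero, mul_one] at hht
    have h5 := congrArg (fun z => z * Real.exp (Isc * Real.arcsin t)) hht
    rwa [mul_assoc, ← Real.exp_add, neg_mul, neg_add_cancel, Real.exp_zero, mul_one] at h5
  · -- exponential form → equality
    rintro ⟨C, hC, κ, hgC⟩
    have hkd : ∀ x ∈ Set.Ioo (-1:ℝ) 1, HasDerivAt (fun y => C * Real.exp (κ * Real.arcsin y))
        (κ * G.g x / Real.sqrt (1 - x^2)) x := by
      intro x hx
      have h1 := (((Real.hasDerivAt_arcsin hx.1.ne' hx.2.ne).const_mul κ).exp).const_mul C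
      refine h1.congr_deriv ?_
      have hs' : Real.sqrt (1 - x^2) ≠ 0 := (Real.sqrt_pos.2 (hsq x hx)).ne'
      rw [hgC x ⟨hx.1.le, hx.2.le⟩]
      field_simp
    have hψint : ∀ a b : ℝ, -1 < a → b < 1 →
        IntegrableOn (fun x => κ * G.g x / Real.sqrt (1 - x^2)) (Set.Ioc a b) volume := by
      intro a b ha hb
      rcases le_or_gt a b with hab | hab
      · have hIccsub : Set.Icc a b ⊆ Set.Ioo (-1:ℝ) 1 := fun x hx =>
          ⟨lt_of_lt_of_le ha hx.1, lt_of_le_of_lt hx.2 hb⟩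
        have hc1 : ContinuousOn (fun x => κ * (C * Real.exp (κ * Real.arcsin x))
            / Real.sqrt (1 - x^2)) (Set.Icc a b) := by
          apply ContinuousOn.div
          · exact (continuous_const.mul (continuous_const.mul
              ((continuous_const.mul Real.continuous_arcsin).rexp))).continuousOn
          · exact ((continuous_const.sub (continuous_pow 2)).sqrt).continuousOn
          · intro x hx; exact (Real.sqrt_pos.2 (hsq x (hIccsub hx))).ne'
        have hcont : ContinuousOn (fun x => κ * G.g x / Real.sqrt (1 - x^2)) (Set.Icc a b) := by
          refine ContinuousOn.congr hc1 (fun x hx => ?_)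
          have hxI := hIccsub hx
          rw [hgC x ⟨hxI.1.le, hxI.2.le⟩]
        exact (hcont.integrableOn_Icc).mono_set Set.Ioc_subset_Icc_self
      · rw [Set.Ioc_eq_empty (not_lt.2 hab.le)]; exact integrableOn_empty
    have hdgIoc : ∀ a b : ℝ, -1 < a → b < 1 → IntegrableOn G.dg (Set.Ioc a b) volume := by
      intro a b ha hb
      rcases le_or_gt a b with hab | hab
      · have h := G.dg_intervalIntegrable
        rw [intervalIntegrable_iff_integrableOn_Ioc_of_le (by norm_num : (-1:ℝ) ≤ 1)] at h
        exact h.mono_set (Set.Ioc_subset_Ioc ha.le hb.le)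
      · rw [Set.Ioc_eq_empty (not_lt.2 hab.le)]; exact integrableOn_empty
    have hzero : ∀ a b : ℝ, -1 < a → b < 1 →
        ∫ x in Set.Ioc a b, (G.dg x - κ * G.g x / Real.sqrt (1 - x^2)) = 0 := by
      intro a b ha hb
      rcases le_or_gt b a with hba | hab
      · rw [Set.Ioc_eq_empty (not_lt.2 hba)]; simp
      · have haIcc : a ∈ Set.Icc (-1:ℝ) 1 := ⟨ha.le, by linarith⟩
        have hbIcc : b ∈ Set.Icc (-1:ℝ) 1 := ⟨by linarith, hb.le⟩
        have hxu : ∀ y ∈ Set.Icc (-1:ℝ) 1, y ∈ Set.uIcc (-1:ℝ) 1 := by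
          intro y hy
          rw [Set.uIcc_of_le (by norm_num : (-1:ℝ) ≤ 1)]
          exact hy
        rw [integral_sub (hdgIoc a b ha hb) (hψint a b ha hb)]
        have h1 : ∫ x in Set.Ioc a b, G.dg x = G.g b - G.g a := by
          have i1 : IntervalIntegrable G.dg volume (-1) a :=
            G.dg_intervalIntegrable.mono_set
              (Set.uIcc_subset_uIcc Set.left_mem_uIcc (hxu a haIcc))
          have i2 : IntervalIntegrable G.dg volume a b :=
            G.dg_intervalIntegrable.mono_set
              (Set.uIcc_subset_uIcc (hxu a haIcc) (hxu b hbIcc))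
          have hadd := intervalIntegral.integral_add_adjacent_intervals i1 i2
          have e2 := G.abs_cont a haIcc
          have e3 := G.abs_cont b hbIcc
          rw [← intervalIntegral.integral_of_le hab.le]
          linarith [hadd, e2, e3]
        have h2 : ∫ x in Set.Ioc a b, κ * G.g x / Real.sqrt (1 - x^2) = G.g b - G.g a := by
          rw [← intervalIntegral.integral_of_le hab.le]
          have hIccsub : Set.Icc a b ⊆ Set.Ioo (-1:ℝ) 1 := fun x hx =>
            ⟨lt_of_lt_of_le ha hx.1, lt_of_le_of_lt hx.2 hb⟩
          have hd : ∀ x ∈ Set.uIcc a b, HasDerivAt (fun y => C * Real.exp (κ * Real.arcsin y))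
              (κ * G.g x / Real.sqrt (1 - x^2)) x := by
            intro x hx
            rw [Set.uIcc_of_le hab.le] at hx
            exact hkd x (hIccsub hx)
          have hint2 : IntervalIntegrable (fun x => κ * G.g x / Real.sqrt (1 - x^2))
              volume a b := by
            rw [intervalIntegrable_iff_integrableOn_Ioc_of_le hab.le]
            exact hψint a b ha hb
          rw [intervalIntegral.integral_eq_sub_of_hasDerivAt hd hint2,
            ← hgC b hbIcc, ← hgC a haIcc]
        rw [h1, h2]; ring
    have hψae := auxScore_ae_zero_on_Ioo _
      (fun a b ha hb => ((hdgIoc a b ha hb).sub (hψint a b ha hb))) hzero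
    have hfκ : ∀ᵐ t ∂(volume.restrict (Set.Ioo (-1:ℝ) 1)), f t = κ := by
      filter_upwards [hψae, ae_restrict_mem hIoo] with t h1 h2
      have hg' : G.g t ≠ 0 := (G.gpos t ⟨h2.1.le, h2.2.le⟩).ne'
      have hs' : Real.sqrt (1 - t^2) ≠ 0 := (Real.sqrt_pos.2 (hsq t h2)).ne'
      have h3 : G.dg t = κ * G.g t / Real.sqrt (1 - t^2) := by
        have := sub_eq_zero.mp h1
        linarith [this]
      simp only [hfdef]
      rw [h3]
      field_simp
    have hIκ : Isc = κ := by
      rw [hI]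
      have hcong : ∫ t in Set.Ioo (-1:ℝ) 1, f t * w t = ∫ t in Set.Ioo (-1:ℝ) 1, κ * w t := by
        refine integral_congr_ae ?_
        filter_upwards [hfκ] with t ht
        rw [ht]
      rw [hcong, integral_const_mul, hw1, mul_one]
    have hJκ : scoreJ p G = κ^2 := by
      rw [hJ]
      have hcong : ∫ t in Set.Ioo (-1:ℝ) 1, f t^2 * w t
          = ∫ t in Set.Ioo (-1:ℝ) 1, κ^2 * w t := by
        refine integral_congr_ae ?_
        filter_upwards [hfκ] with t ht
        rw [ht]
      rw [hcong, integral_const_mul, hw1, mul_one]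
    rw [hJκ, hIκ]
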